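/- The n×n matrix H_n(h) = ½ [B_n(h) A_n(h)^{-1} + (B_n(h) A_n(h)^{-1})^T] is positive definite, where B_n(h)[i₁,i₂] = (-1)^{n-i₁-1} (n+i₂)!/(i₁+i₂-n+1)! · h^{i₂+i₁-n+1} when i₁+i₂ ≥ n−1 and 0 otherwise (indices 0 to n−1), and A_n(h) is the Wronskian matrix of t^n, ..., t^{2n-1} at t = h > 0. -/

import Mathlib

open Matrix MeasureTheory intervalIntegral Polynomial

/-- The matrix `B_n(h)` from the explicit cost formula. -/
noncomputable def Bmat (n : ℕ) (h : ℝ) : Matrix (Fin n) (Fin n) ℝ :=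
  Matrix.of fun i₁ i₂ : Fin n =>
    if n - 1 ≤ i₁.1 + i₂.1 then
      (-1 : ℝ) ^ (n - i₁.1 - 1) * ((n + i₂.1).factorial : ℝ) /
        ((i₁.1 + i₂.1 + 1 - n).factorial : ℝ) * h ^ (i₁.1 + i₂.1 + 1 - n)
    else 0

/-- The Wronskian matrix `A_n(h)` of `t^n, ..., t^{2n-1}` at `t = h`. -/
noncomputable def Amat (n : ℕ) (h : ℝ) : Matrix (Fin n) (Fin n) ℝ :=
  Matrix.of fun k i : Fin n =>
    (((n + i.1).factorial : ℝ) / ((n + i.1 - k.1).factorial : ℝ)) * h ^ (n + i.1 - k.1)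

/-- The Gram-type matrix `K = Aᵀ B`. -/
noncomputable def Kmat (n : ℕ) (h : ℝ) : Matrix (Fin n) (Fin n) ℝ :=
  Matrix.of fun i j : Fin n =>
    (((n + i.1).factorial : ℝ) / (i.1.factorial : ℝ)) *
      (((n + j.1).factorial : ℝ) / (j.1.factorial : ℝ)) *
      (h ^ (i.1 + j.1 + 1) / ((i.1 : ℝ) + (j.1 : ℝ) + 1))

lemma alt_sum_choose (s : ℕ) (hs : 1 ≤ s) (j : ℕ) :
    ∑ m ∈ Finset.range (j+1), (-1:ℤ)^(j-m) * (s.choose m) = (s-1).choose j := by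
  induction j with
  | zero => simp
  | succ j ih =>
    rw [Finset.sum_range_succ]
    have h1 : ∀ m ∈ Finset.range (j+1), (-1:ℤ)^(j+1-m) * (s.choose m)
        = -((-1:ℤ)^(j-m) * (s.choose m)) := by
      intro m hm
      rw [Finset.mem_range] at hm
      have : j + 1 - m = (j - m) + 1 := by omega
      rw [this, pow_succ]; ring
    rw [Finset.sum_congr rfl h1, Finset.sum_neg_distrib, ih]
    have h2 : s.choose (j+1) = (s-1).choose j + (s-1).choose (j+1) := by
      have : s - 1 + 1 = s := by omega
      conv_lhs => rw [← this, Nat.choose_succ_succ]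
    simp only [Nat.sub_self, pow_zero, one_mul, h2]
    push_cast; ring

lemma sum_real (i j : ℕ) :
    ∑ m ∈ Finset.range (j+1), (-1:ℝ)^(j-m) / (((i+j+1-m).factorial : ℝ) * (m.factorial : ℝ))
      = 1 / ((i.factorial : ℝ) * (j.factorial : ℝ) * ((i:ℝ)+(j:ℝ)+1)) := by
  have hstep : ∀ m ∈ Finset.range (j+1),
      (-1:ℝ)^(j-m) / (((i+j+1-m).factorial : ℝ) * (m.factorial : ℝ))
        = ((-1:ℝ)^(j-m) * ((i+j+1).choose m : ℝ)) / ((i+j+1).factorial : ℝ) := by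
    intro m hm
    rw [Finset.mem_range] at hm
    have hms : m ≤ i+j+1 := by omega
    have hfac : ((i+j+1).choose m) * m.factorial * (i+j+1-m).factorial = (i+j+1).factorial :=
      Nat.choose_mul_factorial_mul_factorial hms
    have h1 : ((i+j+1-m).factorial : ℝ) ≠ 0 := Nat.cast_ne_zero.mpr (Nat.factorial_ne_zero _)
    have h2 : ((m).factorial : ℝ) ≠ 0 := Nat.cast_ne_zero.mpr (Nat.factorial_ne_zero _)
    have h3 : ((i+j+1).factorial : ℝ) ≠ 0 := Nat.cast_ne_zero.mpr (Nat.factorial_ne_zero _)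
    rw [div_eq_div_iff (by positivity) h3]
    have := congrArg (fun x : ℕ => (x:ℝ)) hfac
    push_cast at this
    linear_combination (-(-1:ℝ)^(j-m)) * this
  rw [Finset.sum_congr rfl hstep, ← Finset.sum_div]
  have key : ∑ m ∈ Finset.range (j+1), ((-1:ℝ)^(j-m) * ((i+j+1).choose m : ℝ))
      = ((i+j).choose j : ℝ) := by
    have := alt_sum_choose (i+j+1) (by omega) j
    have h' : i + j + 1 - 1 = i + j := by omega
    rw [h'] at this
    exact_mod_cast congrArg (fun x : ℤ => (x:ℝ)) this
  rw [key]
  have hfac : ((i+j).choose j) * j.factorial * i.factorial = (i+j).factorial := by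
    have := Nat.choose_mul_factorial_mul_factorial (Nat.le_add_left j i)
    simpa [Nat.add_sub_cancel] using this
  have hfs : (i+j+1).factorial = (i+j+1) * (i+j).factorial := Nat.factorial_succ _
  have h3 : ((i+j).factorial : ℝ) ≠ 0 := Nat.cast_ne_zero.mpr (Nat.factorial_ne_zero _)
  have h4 : (i.factorial : ℝ) ≠ 0 := Nat.cast_ne_zero.mpr (Nat.factorial_ne_zero _)
  have h5 : (j.factorial : ℝ) ≠ 0 := Nat.cast_ne_zero.mpr (Nat.factorial_ne_zero _)
  have h6 : ((i:ℝ)+(j:ℝ)+1) ≠ 0 := by positivity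
  have hc := congrArg (fun x : ℕ => (x:ℝ)) hfac
  have hs := congrArg (fun x : ℕ => (x:ℝ)) hfs
  push_cast at hc hs
  rw [hs, div_eq_div_iff (by positivity) (by positivity)]
  linear_combination ((i:ℝ)+(j:ℝ)+1) * hc

lemma key_AB (n : ℕ) (h : ℝ) : (Amat n h)ᵀ * Bmat n h = Kmat n h := by
  ext i j
  rw [Matrix.mul_apply]
  simp only [Matrix.transpose_apply, Amat, Bmat, Matrix.of_apply]
  have hj : j.1 < n := j.2
  have hi : i.1 < n := i.2
  have step1 : ∀ k : Fin n,
      (((n + i.1).factorial : ℝ) / ((n + i.1 - k.1).factorial : ℝ)) * h ^ (n + i.1 - k.1) *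
        (if n - 1 ≤ k.1 + j.1 then
          (-1 : ℝ) ^ (n - k.1 - 1) * ((n + j.1).factorial : ℝ) /
            ((k.1 + j.1 + 1 - n).factorial : ℝ) * h ^ (k.1 + j.1 + 1 - n)
        else 0)
      = if n - 1 ≤ k.1 + j.1 then
          (((n + i.1).factorial : ℝ) / ((n + i.1 - k.1).factorial : ℝ)) * h ^ (n + i.1 - k.1) *
          ((-1 : ℝ) ^ (n - k.1 - 1) * ((n + j.1).factorial : ℝ) /
            ((k.1 + j.1 + 1 - n).factorial : ℝ) * h ^ (k.1 + j.1 + 1 - n))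
        else 0 := by
    intro k; split <;> simp
  rw [Finset.sum_congr rfl (fun k _ => step1 k)]
  rw [Fin.sum_univ_eq_sum_range (fun k =>
      if n - 1 ≤ k + j.1 then
        (((n + i.1).factorial : ℝ) / ((n + i.1 - k).factorial : ℝ)) * h ^ (n + i.1 - k) *
        ((-1 : ℝ) ^ (n - k - 1) * ((n + j.1).factorial : ℝ) /
          ((k + j.1 + 1 - n).factorial : ℝ) * h ^ (k + j.1 + 1 - n))
      else 0)]
  rw [← Finset.sum_filter]
  rw [show ((Finset.range n).filter (fun k => n - 1 ≤ k + j.1))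
      = Finset.image (fun m => n - 1 - j.1 + m) (Finset.range (j.1+1)) by
    ext k
    simp only [Finset.mem_filter, Finset.mem_range, Finset.mem_image]
    constructor
    · rintro ⟨h1, h2⟩; exact ⟨k + j.1 + 1 - n, by omega, by omega⟩
    · rintro ⟨m, hm, rfl⟩; omega]
  rw [Finset.sum_image (by intro a _ b _ hab; beta_reduce at hab; omega)]
  have hterm : ∀ m ∈ Finset.range (j.1+1),
      (((n + i.1).factorial : ℝ) / ((n + i.1 - (n-1-j.1+m)).factorial : ℝ)) * h ^ (n + i.1 - (n-1-j.1+m)) *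
        ((-1 : ℝ) ^ (n - (n-1-j.1+m) - 1) * ((n + j.1).factorial : ℝ) /
          (((n-1-j.1+m) + j.1 + 1 - n).factorial : ℝ) * h ^ ((n-1-j.1+m) + j.1 + 1 - n))
      = (((n + i.1).factorial : ℝ) * ((n + j.1).factorial : ℝ) * h ^ (i.1 + j.1 + 1)) *
          ((-1:ℝ)^(j.1-m) / (((i.1+j.1+1-m).factorial : ℝ) * (m.factorial : ℝ))) := by
    intro m hm
    rw [Finset.mem_range] at hm
    have e1 : n + i.1 - (n-1-j.1+m) = i.1 + j.1 + 1 - m := by omega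
    have e2 : (n-1-j.1+m) + j.1 + 1 - n = m := by omega
    have e3 : n - (n-1-j.1+m) - 1 = j.1 - m := by omega
    rw [e1, e2, e3]
    have hpow : h ^ (i.1+j.1+1-m) * h ^ m = h ^ (i.1+j.1+1) := by
      rw [← pow_add]; congr 1; omega
    rw [← hpow]; ring
  rw [Finset.sum_congr rfl hterm, ← Finset.mul_sum, sum_real i.1 j.1]
  simp only [Kmat, Matrix.of_apply]
  have h4 : (i.1.factorial : ℝ) ≠ 0 := Nat.cast_ne_zero.mpr (Nat.factorial_ne_zero _)
  have h5 : (j.1.factorial : ℝ) ≠ 0 := Nat.cast_ne_zero.mpr (Nat.factorial_ne_zero _)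
  have h6 : ((i.1:ℝ)+(j.1:ℝ)+1) ≠ 0 := by positivity
  field_simp

lemma integral_sq_poly_pos (h : ℝ) (hh : 0 < h) (q : Polynomial ℝ) (hq : q ≠ 0) :
    0 < ∫ t in (0:ℝ)..h, (q.eval t) ^ 2 := by
  have hcont : Continuous fun t : ℝ => (q.eval t) ^ 2 := (q.continuous_aeval).pow 2
  rw [intervalIntegral.integral_of_le hh.le]
  rw [MeasureTheory.integral_pos_iff_support_of_nonneg_ae
    (Filter.Eventually.of_forall (fun t => sq_nonneg _))
    hcont.integrableOn_Ioc]
  rw [MeasureTheory.Measure.restrict_apply' measurableSet_Ioc]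
  have hsub : Set.Ioc (0:ℝ) h \ {t | q.IsRoot t}
      ⊆ (Function.support fun t => (q.eval t) ^ 2) ∩ Set.Ioc 0 h := by
    rintro t ⟨ht1, ht2⟩
    refine ⟨?_, ht1⟩
    simp only [Function.mem_support]
    intro hcontra
    exact ht2 (by simpa [Polynomial.IsRoot] using pow_eq_zero_iff (n := 2) (by norm_num) |>.mp hcontra)
  calc (0 : ENNReal) < ENNReal.ofReal h := by simpa using hh
    _ = volume (Set.Ioc (0:ℝ) h) := by rw [Real.volume_Ioc]; norm_num
    _ = volume (Set.Ioc (0:ℝ) h \ {t | q.IsRoot t}) :=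
        (MeasureTheory.measure_diff_null ((Polynomial.finite_setOf_isRoot hq).measure_zero _)).symm
    _ ≤ volume ((Function.support fun t => (q.eval t) ^ 2) ∩ Set.Ioc 0 h) := measure_mono hsub

lemma Kmat_posDef (n : ℕ) (h : ℝ) (hh : 0 < h) : (Kmat n h).PosDef := by
  rw [Matrix.posDef_iff_dotProduct_mulVec]
  constructor
  · ext i j
    simp only [Kmat, Matrix.conjTranspose_apply, Matrix.of_apply, star_trivial]
    rw [add_comm j.1 i.1, add_comm (j.1:ℝ) (i.1:ℝ)]
    ring
  · intro x hx
    obtain ⟨a, ha⟩ : ∃ a : Fin n → ℝ,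
        a = fun i => x i * (((n + i.1).factorial : ℝ) / (i.1.factorial : ℝ)) := ⟨_, rfl⟩
    have qform : star x ⬝ᵥ Kmat n h *ᵥ x
        = ∑ i : Fin n, ∑ j : Fin n, (a i * a j) * (h ^ (i.1 + j.1 + 1) / ((i.1:ℝ) + (j.1:ℝ) + 1)) := by
      simp only [dotProduct, Matrix.mulVec, star_trivial, Kmat, Matrix.of_apply,
        dotProduct, Finset.mul_sum]
      refine Finset.sum_congr rfl fun i _ => Finset.sum_congr rfl fun j _ => ?_
      simp only [ha]
      ring
    obtain ⟨q, hqdef⟩ : ∃ q : Polynomial ℝ, q = ∑ i : Fin n, Polynomial.C (a i) * Polynomial.X ^ i.1 :=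
      ⟨_, rfl⟩
    have heval : ∀ t : ℝ, q.eval t = ∑ i : Fin n, a i * t ^ i.1 := by
      intro t
      simp [hqdef, Polynomial.eval_finset_sum]
    have hqne : q ≠ 0 := by
      obtain ⟨i₀, hi₀⟩ : ∃ i₀, x i₀ ≠ 0 := by
        by_contra hcon
        push_neg at hcon
        exact hx (funext hcon)
      have hai : a i₀ ≠ 0 := by
        rw [ha]
        refine mul_ne_zero hi₀ ?_
        have h1 : (0:ℝ) < ((n + i₀.1).factorial : ℝ) := by positivity
        have h2 : (0:ℝ) < (i₀.1.factorial : ℝ) := by positivity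
        positivity
      intro hq0
      apply hai
      have : q.coeff i₀.1 = a i₀ := by
        rw [hqdef, Polynomial.finset_sum_coeff]
        rw [Finset.sum_eq_single i₀]
        · simp [Polynomial.coeff_C_mul, Polynomial.coeff_X_pow]
        · intro j _ hj
          have : i₀.1 ≠ j.1 := fun hc => hj (Fin.ext hc.symm)
          simp [Polynomial.coeff_C_mul, Polynomial.coeff_X_pow, this]
        · simp
      rw [← this, hq0]
      simp
    have expand : ∀ t : ℝ, (q.eval t) ^ 2
        = ∑ i : Fin n, ∑ j : Fin n, (a i * a j) * t ^ (i.1 + j.1) := by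
      intro t
      rw [heval, sq, Finset.sum_mul_sum]
      refine Finset.sum_congr rfl fun i _ => Finset.sum_congr rfl fun j _ => ?_
      rw [pow_add]; ring
    have integ : (∫ t in (0:ℝ)..h, (q.eval t) ^ 2)
        = ∑ i : Fin n, ∑ j : Fin n, (a i * a j) * (h ^ (i.1 + j.1 + 1) / ((i.1:ℝ) + (j.1:ℝ) + 1)) := by
      rw [intervalIntegral.integral_congr
        (g := fun t => ∑ i : Fin n, ∑ j : Fin n, (a i * a j) * t ^ (i.1 + j.1))
        (fun t _ => expand t)]
      rw [intervalIntegral.integral_finset_sum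
        (f := fun (i : Fin n) (t : ℝ) => ∑ j : Fin n, (a i * a j) * t ^ (i.1 + j.1))
        (fun i _ => Continuous.intervalIntegrable
          (continuous_finset_sum _ fun j _ => continuous_const.mul (continuous_pow (i.1 + j.1))) _ _)]
      refine Finset.sum_congr rfl fun i _ => ?_
      rw [intervalIntegral.integral_finset_sum
        (f := fun (j : Fin n) (t : ℝ) => (a i * a j) * t ^ (i.1 + j.1))
        (fun j _ =>
          (continuous_const.mul (continuous_pow (i.1 + j.1))).intervalIntegrable _ _)]
      refine Finset.sum_congr rfl fun j _ => ?_
      rw [intervalIntegral.integral_const_mul, integral_pow]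
      have h0 : ((0:ℝ)) ^ (i.1 + j.1 + 1) = 0 := zero_pow (by omega)
      rw [h0]
      push_cast
      ring
    rw [qform, ← integ]
    exact integral_sq_poly_pos h hh q hqne

lemma posDef_conj {n : ℕ} {K C : Matrix (Fin n) (Fin n) ℝ} (hK : K.PosDef)
    (hC : IsUnit C.det) : (Cᵀ * K * C).PosDef := by
  rw [Matrix.posDef_iff_dotProduct_mulVec]
  constructor
  · have := Matrix.isHermitian_conjTranspose_mul_mul C hK.1
    rwa [Matrix.conjTranspose_eq_transpose_of_trivial] at this
  · intro x hx
    have hCx : C *ᵥ x ≠ 0 := by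
      intro hc
      exact hx (Matrix.mulVec_injective_iff_isUnit.mpr
        ((Matrix.isUnit_iff_isUnit_det C).mpr hC) (by simpa using hc))
    have := hK.dotProduct_mulVec_pos hCx
    simpa [star_trivial, ← Matrix.mulVec_mulVec, Matrix.dotProduct_mulVec,
      Matrix.vecMul_transpose] using this

theorem H_matrix_posDef (n : ℕ) (hn : 1 ≤ n) (h : ℝ) (hh : 0 < h) :
    Matrix.PosDef ((1 / 2 : ℝ) •
      (Bmat n h * (Amat n h)⁻¹ + Matrix.transpose (Bmat n h * (Amat n h)⁻¹))) := by
  have hK := Kmat_posDef n h hh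
  have hkey := key_AB n h
  have hdetK : (Kmat n h).det ≠ 0 := ne_of_gt hK.det_pos
  have hdetA : IsUnit (Amat n h).det := by
    have hprod : (Amat n h).det * (Bmat n h).det ≠ 0 := by
      rw [← Matrix.det_transpose (Amat n h), ← Matrix.det_mul, hkey]
      exact hdetK
    exact isUnit_iff_ne_zero.mpr (left_ne_zero_of_mul hprod)
  have hdetAT : IsUnit (Amat n h)ᵀ.det := by rwa [Matrix.det_transpose]
  have hS : Bmat n h * (Amat n h)⁻¹ = ((Amat n h)⁻¹)ᵀ * Kmat n h * (Amat n h)⁻¹ := by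
    rw [Matrix.transpose_nonsing_inv, ← hkey, ← Matrix.mul_assoc,
      Matrix.nonsing_inv_mul _ hdetAT, Matrix.one_mul]
  have hdetAinv : IsUnit (Amat n h)⁻¹.det := (Amat n h).isUnit_nonsing_inv_det hdetA
  have hPD : (Bmat n h * (Amat n h)⁻¹).PosDef := by
    rw [hS]
    exact posDef_conj hK hdetAinv
  have hKT : (Kmat n h)ᵀ = Kmat n h := by
    rw [← Matrix.conjTranspose_eq_transpose_of_trivial]
    exact hK.1
  have hsymm : (Bmat n h * (Amat n h)⁻¹)ᵀ = Bmat n h * (Amat n h)⁻¹ := by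
    conv_lhs => rw [hS]
    rw [Matrix.transpose_mul, Matrix.transpose_mul, Matrix.transpose_transpose, hKT,
      ← Matrix.mul_assoc, hS]
  have hhalf : (1 / 2 : ℝ) •
      (Bmat n h * (Amat n h)⁻¹ + Matrix.transpose (Bmat n h * (Amat n h)⁻¹))
      = Bmat n h * (Amat n h)⁻¹ := by
    rw [hsymm]
    ext i j
    simp only [Matrix.smul_apply, Matrix.add_apply, smul_eq_mul]
    ring
  rw [hhalf]
  exact hPD
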